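/- Let R₀ := φ(A) with A = [[T, 0], [1−T², T]] and T = exp(ht), in A₂(ℂ(t))[[h]], and let P be the algebra automorphism of A₂(ℂ(t))[[h]] interchanging (x₁, p₁) ↔ (x₂, p₂). Then P(R₀·x₁·R₀^{−1}) = x₁ − T²x₁ + T x₂ and P(R₀·x₂·R₀^{−1}) = T x₁; equivalently, R₀·x₁·R₀^{−1} = T x₁ + (1 − T²) x₂ and R₀·x₂·R₀^{−1} = T x₂. -/

import Mathlib

open PowerSeries

noncomputable section

/-- Exponential of a formal power series with coefficients in a (possibly noncommutative)
ℚ-algebra; intended for series with zero constant term. -/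
def psExp {B : Type*} [Ring B] [Algebra ℚ B] (a : PowerSeries B) : PowerSeries B :=
  PowerSeries.mk fun m =>
    ∑ r ∈ Finset.range (m + 1), (r.factorial : ℚ)⁻¹ • (PowerSeries.coeff m (a ^ r))

/-- Coefficientwise extension of a map `R → S` to formal power series. -/
def liftFun {R S : Type*} [Semiring R] [Semiring S] (f : R → S) (g : PowerSeries R) :
    PowerSeries S :=
  PowerSeries.mk fun m => f (PowerSeries.coeff m g)

/-- The normal-ordering property of a map `N : k[x_1,…,x_n,p_1,…,p_n] → A_n(k)`. -/
def IsNormalOrdering {k : Type*} [Field k] {n : ℕ} {B : Type*} [Ring B] [Algebra k B]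
    (x p : Fin n → B) (N : MvPolynomial (Fin n ⊕ Fin n) k →ₗ[k] B) : Prop :=
  ∀ d : (Fin n ⊕ Fin n) →₀ ℕ,
    N (MvPolynomial.monomial d 1) =
      ((List.finRange n).map fun i => x i ^ d (Sum.inl i)).prod *
        ((List.finRange n).map fun i => p i ^ d (Sum.inr i)).prod

/-- `φ(A) := N(exp(Σ_{i,j} x_i (A − 𝟙)_{ij} p_j))`. -/
def phiMat {k : Type*} [Field k] [CharZero k] {n : ℕ} {B : Type*} [Ring B] [Algebra k B]
    (N : MvPolynomial (Fin n ⊕ Fin n) k →ₗ[k] B)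
    (A : Matrix (Fin n) (Fin n) (PowerSeries k)) : PowerSeries B :=
  liftFun N (psExp (∑ i : Fin n, ∑ j : Fin n,
    PowerSeries.C
        (MvPolynomial.X (Sum.inl i) * MvPolynomial.X (Sum.inr j) : MvPolynomial (Fin n ⊕ Fin n) k) *
      PowerSeries.map (MvPolynomial.C) ((A - 1) i j)))

instance : CharZero (RatFunc ℂ) :=
  charZero_of_injective_algebraMap (algebraMap ℚ (RatFunc ℂ)).injective

/-- `T := exp(h·t) ∈ ℂ(t)[[h]]`, where `t` is the rational-function variable and `h` the
power-series variable. -/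
def Tser : PowerSeries (RatFunc ℂ) :=
  psExp ((PowerSeries.X : PowerSeries (RatFunc ℂ)) * PowerSeries.C (RatFunc.X : RatFunc ℂ))

/-- The matrix `A = [[T, 0], [1 − T², T]]` over `ℂ(t)[[h]]`. -/
def matT : Matrix (Fin 2) (Fin 2) (PowerSeries (RatFunc ℂ)) :=
  !![Tser, 0; 1 - Tser ^ 2, Tser]




section Inverse
variable {B : Type*} [Ring B]

lemma coeff_pow_zero_lemma {f : PowerSeries B} (h : coeff 0 f = 0) :
    ∀ r b, b < r → coeff b (f ^ r) = 0 := by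
  intro r
  induction r with
  | zero => intro b hb; omega
  | succ r ih =>
    intro b hb
    rw [pow_succ', coeff_mul]
    apply Finset.sum_eq_zero
    rintro ⟨a, c⟩ hm
    rw [Finset.HasAntidiagonal.mem_antidiagonal] at hm
    rcases Nat.eq_zero_or_pos a with ha | ha
    · subst ha; rw [h, zero_mul]
    · rw [ih c (by omega), mul_zero]

noncomputable def invCoeff (F : PowerSeries B) : ℕ → B
  | 0 => 1
  | (m+1) => -(∑ j ∈ Finset.range (m+1), coeff (j+1) F * invCoeff F (m - j))
  decreasing_by exact Nat.lt_succ_of_le (Nat.sub_le m j)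

lemma right_inv_aux (F : PowerSeries B) (h : coeff 0 F = 1) :
    F * PowerSeries.mk (invCoeff F) = 1 := by
  ext n
  rw [coeff_mul, Finset.Nat.sum_antidiagonal_eq_sum_range_succ_mk]
  cases n with
  | zero => simp [invCoeff, h]
  | succ m =>
    rw [Finset.sum_range_succ']
    simp only [coeff_mk, h, Nat.sub_zero, one_mul]
    have : invCoeff F (m+1) = -(∑ j ∈ Finset.range (m+1), coeff (j+1) F * invCoeff F (m - j)) := by
      rw [invCoeff]
    rw [coeff_one, if_neg (Nat.succ_ne_zero m)]
    have h2 : ∀ i ∈ Finset.range (m+1), coeff (i+1) F * invCoeff F (m + 1 - (i+1))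
        = coeff (i+1) F * invCoeff F (m - i) := by
      intro i hi
      have he : m + 1 - (i+1) = m - i := by omega
      rw [he]
    rw [Finset.sum_congr rfl h2, this]
    exact add_neg_cancel _

noncomputable def invCoeffL (F : PowerSeries B) : ℕ → B
  | 0 => 1
  | (m+1) => -(∑ j ∈ Finset.range (m+1), invCoeffL F (m - j) * coeff (j+1) F)
  decreasing_by exact Nat.lt_succ_of_le (Nat.sub_le m j)

lemma left_inv_aux (F : PowerSeries B) (h : coeff 0 F = 1) :
    PowerSeries.mk (invCoeffL F) * F = 1 := by
  ext n
  rw [coeff_mul]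
  have hsw : ∀ (g : ℕ × ℕ → B) (n : ℕ), ∑ ij ∈ Finset.HasAntidiagonal.antidiagonal n, g ij
      = ∑ k ∈ Finset.range n.succ, g (n - k, k) := by
    intro g n
    rw [← Finset.Nat.sum_antidiagonal_eq_sum_range_succ_mk (fun ij => g (ij.2, ij.1)),
      ← Finset.Nat.sum_antidiagonal_swap]
    rfl
  rw [hsw]
  cases n with
  | zero => simp [invCoeffL, h]
  | succ m =>
    rw [Finset.sum_range_succ']
    simp only [coeff_mk, h, Nat.sub_zero, mul_one]
    have : invCoeffL F (m+1) = -(∑ j ∈ Finset.range (m+1), invCoeffL F (m - j) * coeff (j+1) F) := by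
      rw [invCoeffL]
    rw [coeff_one, if_neg (Nat.succ_ne_zero m)]
    have h2 : ∀ i ∈ Finset.range (m+1), invCoeffL F (m + 1 - (i+1)) * coeff (i+1) F
        = invCoeffL F (m - i) * coeff (i+1) F := by
      intro i hi
      have he : m + 1 - (i+1) = m - i := by omega
      rw [he]
    rw [Finset.sum_congr rfl h2, this]
    exact add_neg_cancel _

lemma exists_two_sided_inv (F : PowerSeries B) (h : coeff 0 F = 1) :
    ∃ G, F * G = 1 ∧ G * F = 1 := by
  refine ⟨PowerSeries.mk (invCoeff F), right_inv_aux F h, ?_⟩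
  have hR := right_inv_aux F h
  have hL := left_inv_aux F h
  have : PowerSeries.mk (invCoeffL F) = PowerSeries.mk (invCoeff F) := by
    calc PowerSeries.mk (invCoeffL F) = PowerSeries.mk (invCoeffL F) * (F * PowerSeries.mk (invCoeff F)) := by rw [hR, mul_one]
    _ = (PowerSeries.mk (invCoeffL F) * F) * PowerSeries.mk (invCoeff F) := by rw [mul_assoc]
    _ = PowerSeries.mk (invCoeff F) := by rw [hL, one_mul]
  rw [← this]; exact hL
end Inverse






lemma psExp_coeff (B : Type*) [Ring B] [Algebra ℚ B] (a : PowerSeries B) (m : ℕ) :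
    coeff m (psExp a) = ∑ r ∈ Finset.range (m + 1), (r.factorial : ℚ)⁻¹ • (coeff m (a ^ r)) :=
  coeff_mk _ _

lemma psExp_coeff_zero (B : Type*) [Ring B] [Algebra ℚ B] (a : PowerSeries B) :
    coeff 0 (psExp a) = 1 := by
  rw [psExp_coeff]; simp

section Deriv
set_option linter.unusedSectionVars false
variable {k : Type*} [Field k] [CharZero k] {σ : Type*} [DecidableEq σ]

local notation "M" => MvPolynomial σ k

noncomputable def Dps (i : σ) (f : PowerSeries M) : PowerSeries M :=
  PowerSeries.mk fun m => MvPolynomial.pderiv i (PowerSeries.coeff m f)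

lemma Dps_coeff (i : σ) (f : PowerSeries M) (m : ℕ) :
    coeff m (Dps i f) = MvPolynomial.pderiv i (coeff m f) := coeff_mk _ _

lemma Dps_add (i : σ) (f g : PowerSeries M) : Dps i (f + g) = Dps i f + Dps i g := by
  ext m; simp [Dps_coeff]

lemma Dps_mul (i : σ) (f g : PowerSeries M) :
    Dps i (f * g) = Dps i f * g + f * Dps i g := by
  ext m
  simp only [Dps_coeff, coeff_mul, map_add, map_sum, MvPolynomial.pderiv_mul]
  rw [Finset.sum_add_distrib]

lemma Dps_one (i : σ) : Dps i (1 : PowerSeries M) = 0 := by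
  ext m
  simp only [Dps_coeff, coeff_one]
  split <;> simp

lemma coeff_zero_Dps (i : σ) (f : PowerSeries M) (h : coeff 0 f = 0) :
    coeff 0 (Dps i f) = 0 := by rw [Dps_coeff, h, map_zero]

lemma pderiv_qsmul (i : σ) (q : ℚ) (f : M) :
    MvPolynomial.pderiv i (q • f) = q • MvPolynomial.pderiv i f := by
  rw [← algebraMap_smul k q f, Derivation.map_smul, algebraMap_smul]

lemma Dps_pow (i : σ) (f : PowerSeries M) (r : ℕ) :
    Dps i (f ^ (r + 1)) = (r + 1) • (Dps i f * f ^ r) := by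
  induction r with
  | zero => simp
  | succ r ih =>
    have ha : f ^ (r+1+1) = f * f ^ (r+1) := pow_succ' f (r+1)
    have hb : Dps i f * f ^ (r+1) = Dps i f * (f * f ^ r) := by rw [pow_succ']
    have hc : f * (Dps i f * f ^ r) = Dps i f * (f * f ^ r) := by ring
    rw [ha, Dps_mul, ih, mul_smul_comm, hb, hc]
    conv_rhs => rw [succ_nsmul]
    rw [add_comm]

lemma fact_smul_aux (s : ℕ) {V : Type*} [AddCommMonoid V] [Module ℚ V] (y : V) :
    ((s+1).factorial : ℚ)⁻¹ • ((s+1) • y) = (s.factorial : ℚ)⁻¹ • y := by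
  rw [← Nat.cast_smul_eq_nsmul ℚ, smul_smul]
  congr 1
  have h1 : ((s.factorial : ℚ)) ≠ 0 := Nat.cast_ne_zero.2 (Nat.factorial_ne_zero s)
  have h2 : (((s:ℚ)) + 1) ≠ 0 := by positivity
  rw [Nat.factorial_succ]
  push_cast
  field_simp

lemma Dps_psExp (i : σ) (f : PowerSeries M) (h0 : coeff 0 f = 0) :
    Dps i (psExp f) = Dps i f * psExp f := by
  have hDf0 : coeff 0 (Dps i f) = 0 := coeff_zero_Dps i f h0
  ext m
  have hL : coeff m (Dps i (psExp f))
      = ∑ s ∈ Finset.range m, (s.factorial : ℚ)⁻¹ • coeff m (Dps i f * f ^ s) := by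
    rw [Dps_coeff, psExp_coeff, map_sum, Finset.sum_range_succ']
    simp only [pderiv_qsmul, ← Dps_coeff]
    rw [show coeff m (Dps i (f ^ 0)) = 0 by rw [pow_zero, Dps_one]; simp, smul_zero, add_zero]
    apply Finset.sum_congr rfl
    intro s hs
    rw [Dps_pow, map_nsmul, fact_smul_aux]
  have hR : coeff m (Dps i f * psExp f)
      = ∑ s ∈ Finset.range (m+1), (s.factorial : ℚ)⁻¹ • coeff m (Dps i f * f ^ s) := by
    rw [coeff_mul]
    have h1 : ∀ ab ∈ Finset.HasAntidiagonal.antidiagonal m, coeff ab.1 (Dps i f) * coeff ab.2 (psExp f)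
        = ∑ s ∈ Finset.range (m+1),
            (s.factorial : ℚ)⁻¹ • (coeff ab.1 (Dps i f) * coeff ab.2 (f ^ s)) := by
      rintro ⟨a, b⟩ hab
      rw [Finset.HasAntidiagonal.mem_antidiagonal] at hab
      rw [psExp_coeff, Finset.mul_sum]
      simp only [mul_smul_comm]
      exact Finset.sum_subset (Finset.range_subset_range.2 (by omega))
        (fun s hs hns => by
          rw [Finset.mem_range] at hs hns
          rw [coeff_pow_zero_lemma h0 s b (by omega), mul_zero, smul_zero])
    rw [Finset.sum_congr rfl h1, Finset.sum_comm]
    apply Finset.sum_congr rfl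
    intro s hs
    rw [← Finset.smul_sum, ← coeff_mul]
  have hlast : coeff m (Dps i f * f ^ m) = 0 := by
    rw [coeff_mul]
    apply Finset.sum_eq_zero
    rintro ⟨a, b⟩ hab
    rw [Finset.HasAntidiagonal.mem_antidiagonal] at hab
    by_cases hb : b = m
    · have ha : a = 0 := by omega
      subst ha; rw [hDf0, zero_mul]
    · rw [coeff_pow_zero_lemma h0 m b (by omega), mul_zero]
  rw [hL, hR, Finset.sum_range_succ, hlast, smul_zero, add_zero]
end Deriv




section P3Outer
open MvPolynomial
section NOrd
variable {k : Type*} [Field k] {B : Type*} [Ring B] [Algebra k B]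
  (x p : Fin 2 → B)
  (hxx : ∀ i j, x i * x j = x j * x i)
  (hpp : ∀ i j, p i * p j = p j * p i)
  (hpx : ∀ i j, p i * x j - x j * p i = if i = j then (1 : B) else 0)

include hpx

lemma comm_px_ne (i j : Fin 2) (h : i ≠ j) : Commute (p i) (x j) := by
  have := hpx i j
  rw [if_neg h] at this
  exact sub_eq_zero.1 this

lemma px_same (i : Fin 2) : p i * x i = x i * p i + 1 := by
  have := hpx i i
  rw [if_pos rfl, sub_eq_iff_eq_add] at this
  rw [this, add_comm]

lemma ppow_x (i : Fin 2) (n : ℕ) :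
    p i ^ (n+1) * x i = x i * p i ^ (n+1) + (n+1) • p i ^ n := by
  induction n with
  | zero => simp [px_same x p hpx i]
  | succ n ih =>
    have h1 : p i ^ (n+2) * x i = p i ^ (n+1) * (p i * x i) := by
      rw [pow_succ, mul_assoc]
    rw [h1, px_same x p hpx i, mul_add, mul_one, ← mul_assoc, ih, add_mul, smul_mul_assoc,
      mul_assoc (x i), ← pow_succ, ← pow_succ]
    rw [succ_nsmul (p i ^ (n+1)) (n+1), ← add_assoc]

lemma pblock_x0 (c d : ℕ) : (p 0 ^ c * p 1 ^ d) * x 0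
    = x 0 * (p 0 ^ c * p 1 ^ d) + c • (p 0 ^ (c-1) * p 1 ^ d) := by
  have h10 : Commute (p 1) (x 0) := comm_px_ne x p hpx 1 0 (by decide)
  have hcomm : p 1 ^ d * x 0 = x 0 * p 1 ^ d := (h10.pow_left d).eq
  rw [mul_assoc, hcomm, ← mul_assoc]
  cases c with
  | zero => simp
  | succ c' =>
    rw [ppow_x x p hpx 0 c', add_mul, smul_mul_assoc, mul_assoc]
    simp

lemma pblock_x1 (c d : ℕ) : (p 0 ^ c * p 1 ^ d) * x 1
    = x 1 * (p 0 ^ c * p 1 ^ d) + d • (p 0 ^ c * p 1 ^ (d-1)) := by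
  have h01 : Commute (p 0) (x 1) := comm_px_ne x p hpx 0 1 (by decide)
  have hcomm : p 0 ^ c * x 1 = x 1 * p 0 ^ c := (h01.pow_left c).eq
  cases d with
  | zero =>
    simp only [pow_zero, mul_one, Nat.zero_eq, zero_smul, add_zero, zero_smul]
    simpa using hcomm
  | succ d' =>
    rw [mul_assoc, ppow_x x p hpx 1 d', mul_add, ← mul_assoc, hcomm, mul_assoc, mul_smul_comm,
      ← mul_assoc]
    simp

omit hpx

lemma xblock0 (a b : ℕ) (y : B) : x 0 * (x 0 ^ a * x 1 ^ b * y) = x 0 ^ (a+1) * x 1 ^ b * y := by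
  calc x 0 * (x 0 ^ a * x 1 ^ b * y) = x 0 * x 0 ^ a * x 1 ^ b * y := by
        rw [← mul_assoc, ← mul_assoc]
    _ = x 0 ^ (a+1) * x 1 ^ b * y := by rw [← pow_succ']

include hxx in
lemma xblock1 (a b : ℕ) (y : B) : x 1 * (x 0 ^ a * x 1 ^ b * y) = x 0 ^ a * x 1 ^ (b+1) * y := by
  have h : Commute (x 1) (x 0) := hxx 1 0
  calc x 1 * (x 0 ^ a * x 1 ^ b * y) = x 1 * x 0 ^ a * x 1 ^ b * y := by
        rw [← mul_assoc, ← mul_assoc]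
    _ = x 0 ^ a * x 1 * x 1 ^ b * y := by rw [(h.pow_right a).eq]
    _ = x 0 ^ a * x 1 ^ (b+1) * y := by rw [mul_assoc (x 0 ^ a), ← pow_succ']



include hxx in
lemma xb_x0 (a b : ℕ) : x 0 ^ a * x 1 ^ b * x 0 = x 0 ^ (a+1) * x 1 ^ b := by
  have h : Commute (x 1) (x 0) := hxx 1 0
  rw [mul_assoc, (h.pow_left b).eq, ← mul_assoc, ← pow_succ]

omit hpx in
lemma xb_x1 (a b : ℕ) : x 0 ^ a * x 1 ^ b * x 1 = x 0 ^ a * x 1 ^ (b+1) := by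
  rw [mul_assoc, ← pow_succ]

include hxx hpx in
lemma helper_right0 (a b c0 d1 : ℕ) :
    (x 0 ^ a * x 1 ^ b) * (p 0 ^ c0 * p 1 ^ d1) * x 0
      = x 0 ^ (a+1) * x 1 ^ b * (p 0 ^ c0 * p 1 ^ d1)
        + c0 • (x 0 ^ a * x 1 ^ b * (p 0 ^ (c0-1) * p 1 ^ d1)) := by
  rw [mul_assoc, pblock_x0 x p hpx c0 d1, mul_add, mul_smul_comm,
    ← mul_assoc (x 0 ^ a * x 1 ^ b), xb_x0 x hxx a b]

include hpx in
lemma helper_right1 (a b c0 d1 : ℕ) :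
    (x 0 ^ a * x 1 ^ b) * (p 0 ^ c0 * p 1 ^ d1) * x 1
      = x 0 ^ a * x 1 ^ (b+1) * (p 0 ^ c0 * p 1 ^ d1)
        + d1 • (x 0 ^ a * x 1 ^ b * (p 0 ^ c0 * p 1 ^ (d1-1))) := by
  rw [mul_assoc, pblock_x1 x p hpx c0 d1, mul_add, mul_smul_comm,
    ← mul_assoc (x 0 ^ a * x 1 ^ b), xb_x1 x a b]

variable (N : MvPolynomial (Fin 2 ⊕ Fin 2) k →ₗ[k] B) (hN : IsNormalOrdering x p N)

lemma fin2cases : ∀ i : Fin 2, i = 0 ∨ i = 1 := by decide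

lemma X_mul_monomial' (i : Fin 2 ⊕ Fin 2) (d : (Fin 2 ⊕ Fin 2) →₀ ℕ) (c : k) :
    MvPolynomial.X i * monomial d c = MvPolynomial.monomial (Finsupp.single i 1 + d) c := by
  rw [monomial_single_add, pow_one]

include hN in
lemma hN2 (d : (Fin 2 ⊕ Fin 2) →₀ ℕ) : N (monomial d 1)
    = x 0 ^ d (Sum.inl 0) * x 1 ^ d (Sum.inl 1) * (p 0 ^ d (Sum.inr 0) * p 1 ^ d (Sum.inr 1)) := by
  have h := hN d
  have h2 : List.finRange 2 = [0, 1] := rfl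
  rw [h2] at h
  simpa using h

include hN in
lemma N_monomial (d : (Fin 2 ⊕ Fin 2) →₀ ℕ) (c : k) : N (monomial d c)
    = c • (x 0 ^ d (Sum.inl 0) * x 1 ^ d (Sum.inl 1)
        * (p 0 ^ d (Sum.inr 0) * p 1 ^ d (Sum.inr 1))) := by
  rw [show (monomial d c : MvPolynomial (Fin 2 ⊕ Fin 2) k) = c • monomial d 1 by
    rw [smul_monomial, smul_eq_mul, mul_one], map_smul, hN2 x p N hN]

include hN in
lemma N_one' : N 1 = 1 := by
  have := hN2 x p N hN 0
  simpa using this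

include hxx hN in
lemma x_mul_N (i : Fin 2) (f : MvPolynomial (Fin 2 ⊕ Fin 2) k) :
    x i * N f = N (MvPolynomial.X (Sum.inl i) * f) := by
  induction f using MvPolynomial.induction_on' with
  | add f g hf hg => simp only [map_add, mul_add, hf, hg]
  | monomial d c =>
    rw [N_monomial x p N hN, mul_smul_comm, X_mul_monomial', N_monomial x p N hN]
    rcases fin2cases i with rfl | rfl
    · rw [xblock0 x]
      congr 2 <;> simp [Finsupp.single_apply, add_comm]
    · rw [xblock1 x hxx]
      congr 2 <;> simp [Finsupp.single_apply, add_comm]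

include hxx hpx hN in
lemma N_mul_x (kk : Fin 2) (f : MvPolynomial (Fin 2 ⊕ Fin 2) k) :
    N f * x kk = N (MvPolynomial.X (Sum.inl kk) * f) + N (MvPolynomial.pderiv (Sum.inr kk) f) := by
  induction f using MvPolynomial.induction_on' with
  | add f g hf hg =>
    simp only [map_add, mul_add, add_mul, hf, hg]
    abel
  | monomial d c =>
    rw [N_monomial x p N hN, smul_mul_assoc, X_mul_monomial', pderiv_monomial,
      N_monomial x p N hN, N_monomial x p N hN]
    rcases fin2cases kk with rfl | rfl
    · rw [helper_right0 x p hxx hpx, smul_add]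
      congr 1
      · congr 2 <;> simp [Finsupp.single_apply, add_comm]
      · rw [mul_smul, Nat.cast_smul_eq_nsmul]
        congr 2 <;> simp [Finsupp.single_apply]
    · rw [helper_right1 x p hpx, smul_add]
      congr 1
      · congr 2 <;> simp [Finsupp.single_apply, add_comm]
      · rw [mul_smul, Nat.cast_smul_eq_nsmul]
        congr 2 <;> simp [Finsupp.single_apply]

end NOrd
end P3Outer


section Lift

lemma liftFun_coeff {R S : Type*} [Semiring R] [Semiring S] (f : R → S) (g : PowerSeries R)
    (m : ℕ) : coeff m (liftFun f g) = f (coeff m g) := coeff_mk _ _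

variable {k : Type*} [Field k] [CharZero k] {B : Type*} [Ring B] [Algebra k B]
  (x p : Fin 2 → B)
  (hxx : ∀ i j, x i * x j = x j * x i)
  (hpx : ∀ i j, p i * x j - x j * p i = if i = j then (1 : B) else 0)
  (N : MvPolynomial (Fin 2 ⊕ Fin 2) k →ₗ[k] B)
  (hN : IsNormalOrdering x p N)

lemma liftN_add (g g' : PowerSeries (MvPolynomial (Fin 2 ⊕ Fin 2) k)) :
    liftFun N (g + g') = liftFun N g + liftFun N g' := by
  ext m; simp [liftFun_coeff]

include hxx hpx hN in
lemma liftN_mul_x (g : PowerSeries (MvPolynomial (Fin 2 ⊕ Fin 2) k)) (kk : Fin 2) :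
    liftFun N g * PowerSeries.C (x kk)
      = liftFun N (PowerSeries.C (MvPolynomial.X (Sum.inl kk)) * g + Dps (Sum.inr kk) g) := by
  ext m
  rw [PowerSeries.coeff_mul_C, liftFun_coeff, liftFun_coeff, map_add, map_add,
    PowerSeries.coeff_C_mul, Dps_coeff, N_mul_x x p hxx hpx N hN]

include hxx hN in
lemma Cx_mul_liftN (g : PowerSeries (MvPolynomial (Fin 2 ⊕ Fin 2) k)) (i : Fin 2) :
    PowerSeries.C (x i) * liftFun N g
      = liftFun N (PowerSeries.C (MvPolynomial.X (Sum.inl i)) * g) := by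
  ext m
  rw [PowerSeries.coeff_C_mul, liftFun_coeff, liftFun_coeff, PowerSeries.coeff_C_mul,
    x_mul_N x p hxx N hN]

lemma mapC_mul_liftN (u : PowerSeries k) (g : PowerSeries (MvPolynomial (Fin 2 ⊕ Fin 2) k)) :
    PowerSeries.map (algebraMap k B) u * liftFun N g
      = liftFun N (PowerSeries.map
          (MvPolynomial.C : k →+* MvPolynomial (Fin 2 ⊕ Fin 2) k) u * g) := by
  ext m
  rw [PowerSeries.coeff_mul, liftFun_coeff, PowerSeries.coeff_mul, map_sum]
  apply Finset.sum_congr rfl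
  rintro ⟨a, b⟩ _
  rw [liftFun_coeff, PowerSeries.coeff_map, PowerSeries.coeff_map,
    ← MvPolynomial.smul_eq_C_mul, map_smul, Algebra.smul_def]

end Lift

section DerivC
variable {k : Type*} [Field k] [CharZero k] {σ : Type*} [DecidableEq σ]

lemma Dps_C_mul_mapC (i : σ) (a : MvPolynomial σ k) (u : PowerSeries k) :
    Dps i (PowerSeries.C a * PowerSeries.map MvPolynomial.C u)
      = PowerSeries.C (MvPolynomial.pderiv i a)
          * PowerSeries.map MvPolynomial.C u := by
  ext m
  rw [Dps_coeff, PowerSeries.coeff_C_mul, PowerSeries.coeff_C_mul, PowerSeries.coeff_map,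
    MvPolynomial.pderiv_mul, MvPolynomial.pderiv_C, mul_zero, add_zero]
end DerivC

section Concrete

local notation "M2" => MvPolynomial (Fin 2 ⊕ Fin 2) (RatFunc ℂ)

noncomputable def Sarg : PowerSeries M2 :=
  ∑ i : Fin 2, ∑ j : Fin 2,
    PowerSeries.C (MvPolynomial.X (Sum.inl i) * MvPolynomial.X (Sum.inr j)) *
      PowerSeries.map (MvPolynomial.C) ((matT - 1) i j)

lemma Sarg_eq : Sarg
    = PowerSeries.C (MvPolynomial.X (Sum.inl 0) * MvPolynomial.X (Sum.inr 0)) *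
        PowerSeries.map MvPolynomial.C (Tser - 1)
      + (PowerSeries.C (MvPolynomial.X (Sum.inl 1) * MvPolynomial.X (Sum.inr 0)) *
          PowerSeries.map MvPolynomial.C (1 - Tser ^ 2)
        + PowerSeries.C (MvPolynomial.X (Sum.inl 1) * MvPolynomial.X (Sum.inr 1)) *
          PowerSeries.map MvPolynomial.C (Tser - 1)) := by
  rw [Sarg, Fin.sum_univ_two, Fin.sum_univ_two, Fin.sum_univ_two]
  have h00 : (matT - 1) 0 0 = Tser - 1 := by simp [matT, Matrix.sub_apply, Matrix.one_apply]
  have h01 : (matT - 1) 0 1 = 0 := by simp [matT, Matrix.sub_apply, Matrix.one_apply]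
  have h10 : (matT - 1) 1 0 = 1 - Tser ^ 2 := by simp [matT, Matrix.sub_apply, Matrix.one_apply]
  have h11 : (matT - 1) 1 1 = Tser - 1 := by simp [matT, Matrix.sub_apply, Matrix.one_apply]
  rw [h00, h01, h10, h11, map_zero, mul_zero, add_zero]

lemma Tser_c0 : PowerSeries.coeff 0 Tser = 1 := psExp_coeff_zero _ _

lemma TserSub_c0 : PowerSeries.coeff 0 (Tser - 1) = 0 := by
  rw [map_sub, Tser_c0, PowerSeries.coeff_one]
  simp

lemma TserSq_c0 : PowerSeries.coeff 0 (1 - Tser ^ 2) = 0 := by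
  have h := Tser_c0
  rw [PowerSeries.coeff_zero_eq_constantCoeff] at h
  rw [map_sub, PowerSeries.coeff_one, PowerSeries.coeff_zero_eq_constantCoeff, map_pow, h]
  simp

lemma Sarg_c0 : PowerSeries.coeff 0 Sarg = 0 := by
  rw [Sarg_eq]
  have hm : PowerSeries.constantCoeff (R := M2) (PowerSeries.map MvPolynomial.C Tser) = 1 := by
    rw [← PowerSeries.coeff_zero_eq_constantCoeff_apply, PowerSeries.coeff_map, Tser_c0, map_one]
  simp [PowerSeries.coeff_zero_eq_constantCoeff, hm]

lemma DpsSarg0 : Dps (Sum.inr 0) Sarg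
    = PowerSeries.C (MvPolynomial.X (Sum.inl 0)) * PowerSeries.map MvPolynomial.C (Tser - 1)
      + PowerSeries.C (MvPolynomial.X (Sum.inl 1)) *
          PowerSeries.map MvPolynomial.C (1 - Tser ^ 2) := by
  rw [Sarg_eq, Dps_add, Dps_add, Dps_C_mul_mapC, Dps_C_mul_mapC, Dps_C_mul_mapC]
  simp [MvPolynomial.pderiv_mul, MvPolynomial.pderiv_X, Pi.single_apply]

lemma DpsSarg1 : Dps (Sum.inr 1) Sarg
    = PowerSeries.C (MvPolynomial.X (Sum.inl 1)) *
        PowerSeries.map MvPolynomial.C (Tser - 1) := by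
  rw [Sarg_eq, Dps_add, Dps_add, Dps_C_mul_mapC, Dps_C_mul_mapC, Dps_C_mul_mapC]
  simp [MvPolynomial.pderiv_mul, MvPolynomial.pderiv_X, Pi.single_apply]

end Concrete


/-- with `R₀ = φ([[T, 0], [1 − T², T]])` in `A₂(ℂ(t))[[h]]` and `P` the
algebra automorphism interchanging `(x₁, p₁) ↔ (x₂, p₂)`:
`P(R₀ x₁ R₀⁻¹) = x₁ − T²x₁ + T x₂`, `P(R₀ x₂ R₀⁻¹) = T x₁`; equivalently
`R₀ x₁ R₀⁻¹ = T x₁ + (1 − T²) x₂` and `R₀ x₂ R₀⁻¹ = T x₂`. -/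
theorem statement14 {B : Type*} [Ring B] [Algebra ℚ B] [Algebra (RatFunc ℂ) B]
    (x p : Fin 2 → B)
    (hxx : ∀ i j, x i * x j = x j * x i)
    (hpp : ∀ i j, p i * p j = p j * p i)
    (hpx : ∀ i j, p i * x j - x j * p i = if i = j then (1 : B) else 0)
    (N : MvPolynomial (Fin 2 ⊕ Fin 2) (RatFunc ℂ) →ₗ[RatFunc ℂ] B)
    (hN : IsNormalOrdering x p N)
    (P : B →+* B)
    (hPx : ∀ i, P (x i) = x (Equiv.swap (0 : Fin 2) 1 i))
    (hPp : ∀ i, P (p i) = p (Equiv.swap (0 : Fin 2) 1 i))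
    (hPalg : ∀ c : RatFunc ℂ, P (algebraMap (RatFunc ℂ) B c) = algebraMap (RatFunc ℂ) B c) :
    let R₀ : PowerSeries B := phiMat N matT
    let Tw : PowerSeries B := PowerSeries.map (algebraMap (RatFunc ℂ) B) Tser
    ∃ R₀inv : PowerSeries B,
      R₀ * R₀inv = 1 ∧ R₀inv * R₀ = 1 ∧
      PowerSeries.map P (R₀ * PowerSeries.C (x 0) * R₀inv) =
        PowerSeries.C (x 0) - Tw ^ 2 * PowerSeries.C (x 0) + Tw * PowerSeries.C (x 1) ∧
      PowerSeries.map P (R₀ * PowerSeries.C (x 1) * R₀inv) = Tw * PowerSeries.C (x 0) ∧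
      R₀ * PowerSeries.C (x 0) * R₀inv =
        Tw * PowerSeries.C (x 0) + (1 - Tw ^ 2) * PowerSeries.C (x 1) ∧
      R₀ * PowerSeries.C (x 1) * R₀inv = Tw * PowerSeries.C (x 1) := by
  intro R₀ Tw
  have hR0 : R₀ = liftFun N (psExp Sarg) := rfl
  have hc0 : PowerSeries.coeff 0 R₀ = 1 := by
    rw [hR0, liftFun_coeff, psExp_coeff_zero, N_one' x p N hN]
  obtain ⟨G, hFG, hGF⟩ := exists_two_sided_inv R₀ hc0
  have hTw : Tw = PowerSeries.map (algebraMap (RatFunc ℂ) B) Tser := rfl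
  have hSq : PowerSeries.map (algebraMap (RatFunc ℂ) B) (1 - Tser ^ 2) = 1 - Tw ^ 2 := by
    rw [map_sub, map_one, map_pow, hTw]
  have hk0 : R₀ * PowerSeries.C (x 0)
      = Tw * (PowerSeries.C (x 0) * R₀) + (1 - Tw ^ 2) * (PowerSeries.C (x 1) * R₀) := by
    rw [hR0, liftN_mul_x x p hxx hpx N hN, Dps_psExp _ _ Sarg_c0, DpsSarg0]
    have key : PowerSeries.C (MvPolynomial.X (Sum.inl 0)) * psExp Sarg
        + (PowerSeries.C (MvPolynomial.X (Sum.inl 0)) *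
              PowerSeries.map MvPolynomial.C (Tser - 1)
          + PowerSeries.C (MvPolynomial.X (Sum.inl 1)) *
              PowerSeries.map MvPolynomial.C (1 - Tser ^ 2)) * psExp Sarg
        = PowerSeries.map MvPolynomial.C Tser *
            (PowerSeries.C (MvPolynomial.X (Sum.inl 0)) * psExp Sarg)
          + PowerSeries.map MvPolynomial.C (1 - Tser ^ 2) *
            (PowerSeries.C (MvPolynomial.X (Sum.inl 1)) * psExp Sarg) := by
      rw [map_sub, map_one]
      ring
    rw [key, liftN_add N, ← mapC_mul_liftN N, ← mapC_mul_liftN N,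
      ← Cx_mul_liftN x p hxx N hN, ← Cx_mul_liftN x p hxx N hN, hSq, ← hTw]
  have hk1 : R₀ * PowerSeries.C (x 1) = Tw * (PowerSeries.C (x 1) * R₀) := by
    rw [hR0, liftN_mul_x x p hxx hpx N hN, Dps_psExp _ _ Sarg_c0, DpsSarg1]
    have key : PowerSeries.C (MvPolynomial.X (Sum.inl 1)) * psExp Sarg
        + (PowerSeries.C (MvPolynomial.X (Sum.inl 1)) *
            PowerSeries.map MvPolynomial.C (Tser - 1)) * psExp Sarg
        = PowerSeries.map MvPolynomial.C Tser *
            (PowerSeries.C (MvPolynomial.X (Sum.inl 1)) * psExp Sarg) := by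
      rw [map_sub, map_one]
      ring
    rw [key, ← mapC_mul_liftN N, ← Cx_mul_liftN x p hxx N hN, ← hTw]
  have hA : ∀ (u : PowerSeries B) (v : B), u * (PowerSeries.C v * R₀) * G
      = u * PowerSeries.C v := by
    intro u v
    rw [mul_assoc u, mul_assoc (PowerSeries.C v), hFG, mul_one]
  have e0 : R₀ * PowerSeries.C (x 0) * G
      = Tw * PowerSeries.C (x 0) + (1 - Tw ^ 2) * PowerSeries.C (x 1) := by
    rw [hk0, add_mul, hA, hA]
  have e1 : R₀ * PowerSeries.C (x 1) * G = Tw * PowerSeries.C (x 1) := by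
    rw [hk1, hA]
  have hPTw : PowerSeries.map P Tw = Tw := by
    ext m
    rw [PowerSeries.coeff_map, hTw, PowerSeries.coeff_map, hPalg]
  have hs0 : P (x 0) = x 1 := by rw [hPx]; simp
  have hs1 : P (x 1) = x 0 := by rw [hPx]; simp
  have hm0 : PowerSeries.map P (R₀ * PowerSeries.C (x 0) * G)
      = PowerSeries.C (x 0) - Tw ^ 2 * PowerSeries.C (x 0) + Tw * PowerSeries.C (x 1) := by
    rw [e0, map_add, map_mul, map_mul, map_sub, map_one, map_pow, hPTw,
      PowerSeries.map_C, PowerSeries.map_C, hs0, hs1]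
    noncomm_ring
  have hm1 : PowerSeries.map P (R₀ * PowerSeries.C (x 1) * G)
      = Tw * PowerSeries.C (x 0) := by
    rw [e1, map_mul, hPTw, PowerSeries.map_C, hs1]
  exact ⟨G, hFG, hGF, hm0, hm1, e0, e1⟩
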